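/- Let B be the backward shift on ℓ^p(ℕ, ω) with sup_n ω_n/ω_{n+1} < ∞. If there exists a bounded subset A of ℓ^p(ℕ, ω) such that Orb(A, B) = {B^n x : n ∈ ℕ, x ∈ A} is weakly dense in ℓ^p(ℕ, ω), then liminf_{n→∞} ω_n = 0. -/
import Mathlib


open MeasureTheory Filter Topology
open scoped ENNReal

noncomputable section

/-- The weighted measure on the index set `I` giving the point `k` mass `(ω k) ^ p`,
so that `Lp ℂ p (wMeasure p ω)` is the weighted sequence space `ℓ^p(I, ω)`. -/
def wMeasure {I : Type*} [MeasurableSpace I] (p : ENNReal) (ω : I → ℝ) : Measure I :=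
  Measure.sum (fun k => ENNReal.ofReal ((ω k) ^ p.toReal) • Measure.dirac k)

lemma wMeasure_singleton (p : ENNReal) (ω : ℕ → ℝ) (k : ℕ) :
    wMeasure p ω {k} = ENNReal.ofReal (ω k ^ p.toReal) := by
  rw [wMeasure, Measure.sum_apply _ (measurableSet_singleton k), tsum_eq_single k]
  · simp [Measure.dirac_apply]
  · intro j hj
    simp [Measure.dirac_apply, Set.indicator_of_notMem, hj]

lemma wMeasure_singleton_ne_zero {p : ENNReal} {ω : ℕ → ℝ} (hω : ∀ k, 0 < ω k) (k : ℕ) :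
    wMeasure p ω {k} ≠ 0 := by
  rw [wMeasure_singleton]
  simp only [ne_eq, ENNReal.ofReal_eq_zero, not_le]
  exact Real.rpow_pos_of_pos (hω k) _

lemma apply_eq_of_ae {p : ENNReal} {ω : ℕ → ℝ} (hω : ∀ k, 0 < ω k) {f g : ℕ → ℂ}
    (h : f =ᵐ[wMeasure p ω] g) (k : ℕ) : f k = g k := by
  by_contra hne
  refine wMeasure_singleton_ne_zero (p := p) hω k (measure_mono_null ?_ (ae_iff.mp h))
  intro x hx
  simp only [Set.mem_singleton_iff] at hx
  subst hx
  exact hne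

lemma norm_apply_mul_le {p : ENNReal} {ω : ℕ → ℝ} (hp0 : p ≠ 0) (hp : p ≠ ∞)
    [Fact (1 ≤ p)] (hω : ∀ k, 0 < ω k)
    (x : Lp ℂ p (wMeasure p ω)) (k : ℕ) : ‖x k‖ * ω k ≤ ‖x‖ := by
  have hpt : 0 < p.toReal := ENNReal.toReal_pos hp0 hp
  have h1 : (‖x k‖₊ : ℝ≥0∞) ^ p.toReal * wMeasure p ω {k}
      ≤ ∫⁻ a, (‖x a‖₊ : ℝ≥0∞) ^ p.toReal ∂(wMeasure p ω) := by
    rw [← lintegral_singleton (fun a => (‖x a‖₊ : ℝ≥0∞) ^ p.toReal) k]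
    exact setLIntegral_le_lintegral _ _
  have h2 : eLpNorm x p (wMeasure p ω) = (∫⁻ a, (‖x a‖₊ : ℝ≥0∞) ^ p.toReal ∂(wMeasure p ω)) ^ (1 / p.toReal) :=
    eLpNorm_eq_lintegral_rpow_enorm_toReal hp0 hp
  have h3 : (‖x k‖₊ : ℝ≥0∞) * ENNReal.ofReal (ω k) ≤ eLpNorm x p (wMeasure p ω) := by
    have hthis := ENNReal.rpow_le_rpow h1 (le_of_lt (by positivity : (0:ℝ) < 1 / p.toReal))
    rw [h2]
    refine le_trans (le_of_eq ?_) hthis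
    rw [wMeasure_singleton, ← ENNReal.ofReal_rpow_of_pos (hω k),
      ← ENNReal.mul_rpow_of_nonneg _ _ hpt.le,
      ← ENNReal.rpow_mul, mul_one_div_cancel hpt.ne', ENNReal.rpow_one]
  calc ‖x k‖ * ω k = ((‖x k‖₊ : ℝ≥0∞) * ENNReal.ofReal (ω k)).toReal := by
        rw [ENNReal.toReal_mul, ENNReal.coe_toReal, coe_nnnorm,
          ENNReal.toReal_ofReal (hω k).le]
    _ ≤ (eLpNorm x p (wMeasure p ω)).toReal := ENNReal.toReal_mono (Lp.eLpNorm_ne_top x) h3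
    _ = ‖x‖ := (Lp.norm_def x).symm

/-- Evaluation at a point as a continuous linear functional on the weighted `ℓ^p`. -/
def evalCLM (p : ENNReal) [Fact (1 ≤ p)] (ω : ℕ → ℝ) (hp0 : p ≠ 0) (hp : p ≠ ∞)
    (hω : ∀ k, 0 < ω k) (k : ℕ) : Lp ℂ p (wMeasure p ω) →L[ℂ] ℂ :=
  LinearMap.mkContinuous
    { toFun := fun x => x k
      map_add' := fun x y => apply_eq_of_ae hω (Lp.coeFn_add x y) k
      map_smul' := fun c x => apply_eq_of_ae hω (Lp.coeFn_smul c x) k }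
    ((ω k)⁻¹)
    (fun x => by
      change ‖(x : ℕ → ℂ) k‖ ≤ _
      rw [inv_mul_eq_div, le_div_iff₀ (hω k)]
      exact norm_apply_mul_le hp0 hp hω x k)

lemma evalCLM_apply (p : ENNReal) [Fact (1 ≤ p)] (ω : ℕ → ℝ) (hp0 : p ≠ 0) (hp : p ≠ ∞)
    (hω : ∀ k, 0 < ω k) (k : ℕ) (x : Lp ℂ p (wMeasure p ω)) :
    evalCLM p ω hp0 hp hω k x = x k := rfl

theorem stmt5 (p : ENNReal) [Fact (1 ≤ p)] (hp1 : 1 < p) (hp : p ≠ ∞)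
    (ω : ℕ → ℝ) (hω : ∀ k, 0 < ω k)
    (hbdd : ∃ C : ℝ, ∀ n, ω n / ω (n + 1) ≤ C)
    (B : Lp ℂ p (wMeasure p ω) →L[ℂ] Lp ℂ p (wMeasure p ω))
    (hB : ∀ (x : Lp ℂ p (wMeasure p ω)) (k : ℕ), B x k = x (k + 1))
    (A : Set (Lp ℂ p (wMeasure p ω))) (hA : Bornology.IsBounded A)
    (hdense : Dense (toWeakSpace ℂ (Lp ℂ p (wMeasure p ω)) ''
      {z : Lp ℂ p (wMeasure p ω) |
        ∃ (n : ℕ) (a : Lp ℂ p (wMeasure p ω)), a ∈ A ∧ z = (B ^ n) a})) :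
    Filter.liminf ω Filter.atTop = 0 := by
  classical
  have hp0 : p ≠ 0 := by
    intro h; rw [h] at hp1; exact absurd hp1 (by simp)
  -- iterates of B
  have hpow : ∀ (x : Lp ℂ p (wMeasure p ω)) (n k : ℕ), ((B ^ n) x) k = x (n + k) := by
    intro x n
    induction n generalizing x with
    | zero => intro k; simp
    | succ n ih =>
      intro k
      rw [pow_succ, ContinuousLinearMap.mul_apply, ih (B x) k, hB]
      congr 1
      omega
  -- evaluation functional at 0
  set φ : Lp ℂ p (wMeasure p ω) →L[ℂ] ℂ := evalCLM p ω hp0 hp hω 0 with hφ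
  -- φ is surjective
  have hμ0ne : wMeasure p ω {(0:ℕ)} ≠ ∞ := by
    rw [wMeasure_singleton]; exact ENNReal.ofReal_ne_top
  set e : Lp ℂ p (wMeasure p ω) := indicatorConstLp p (measurableSet_singleton (0:ℕ)) hμ0ne (1 : ℂ) with he
  have hφe : φ e = 1 := by
    have h := indicatorConstLp_coeFn (p := p) (μ := wMeasure p ω)
      (hs := measurableSet_singleton (0:ℕ)) (hμs := hμ0ne) (c := (1:ℂ))
    have h0 := apply_eq_of_ae hω h 0
    rw [hφ, evalCLM_apply, h0]
    simp
  have hsurj : Function.Surjective (fun x : Lp ℂ p (wMeasure p ω) => φ x) := by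
    intro c
    refine ⟨c • e, ?_⟩
    simp [_root_.map_smul, hφe]
  -- the evaluation is weakly continuous
  have hcont : Continuous (fun x : WeakSpace ℂ (Lp ℂ p (wMeasure p ω)) => φ ((toWeakSpace ℂ (Lp ℂ p (wMeasure p ω))).symm x)) :=
    WeakBilin.eval_continuous ((topDualPairing ℂ (Lp ℂ p (wMeasure p ω))).flip) φ
  have hsurj2 : Function.Surjective (fun x : WeakSpace ℂ (Lp ℂ p (wMeasure p ω)) => φ ((toWeakSpace ℂ (Lp ℂ p (wMeasure p ω))).symm x)) := by
    intro c
    obtain ⟨x, hx⟩ := hsurj c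
    exact ⟨toWeakSpace ℂ (Lp ℂ p (wMeasure p ω)) x, hx⟩
  -- density of values of φ on the orbit
  set S : Set (Lp ℂ p (wMeasure p ω)) := {z : Lp ℂ p (wMeasure p ω) | ∃ (n : ℕ) (a : Lp ℂ p (wMeasure p ω)), a ∈ A ∧ z = (B ^ n) a} with hS
  have hdense2 : Dense ((fun z => φ z) '' S) := by
    have := hsurj2.denseRange.dense_image hcont hdense
    rwa [Set.image_image] at this
  -- bound on A
  obtain ⟨M₀, hM₀⟩ := hA.exists_norm_le
  set M : ℝ := max M₀ 1 with hM
  have hMpos : 0 < M := lt_of_lt_of_le one_pos (le_max_right _ _)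
  -- key step : small weights exist
  have key : ∀ ε : ℝ, 0 < ε → ∃ n, ω n ≤ ε := by
    intro ε hε
    obtain ⟨y, hyS, hdist⟩ := hdense2.exists_dist_lt ((M / ε + 1 : ℝ) : ℂ) one_pos
    obtain ⟨z, hzS, hzy⟩ := hyS
    obtain ⟨n, a, haA, hz⟩ := hzS
    have hya : y = a n := by
      rw [← hzy, hz]
      show φ ((B ^ n) a) = _
      rw [hφ, evalCLM_apply, hpow a n 0]
      norm_num
    have hRpos : 0 < M / ε := div_pos hMpos hε
    have hy_norm : M / ε ≤ ‖a n‖ := by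
      have h1 : ‖((M / ε + 1 : ℝ) : ℂ)‖ - ‖((M / ε + 1 : ℝ) : ℂ) - y‖ ≤ ‖y‖ := by
        have := norm_sub_norm_le ((M / ε + 1 : ℝ) : ℂ) (((M / ε + 1 : ℝ) : ℂ) - y)
        simpa using this
      have h2 : ‖((M / ε + 1 : ℝ) : ℂ)‖ = M / ε + 1 := by
        rw [Complex.norm_real, Real.norm_eq_abs, abs_of_pos (by linarith)]
      rw [← hya]
      have h3 : ‖((M / ε + 1 : ℝ) : ℂ) - y‖ < 1 := by
        rw [← dist_eq_norm]; exact hdist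
      linarith
    refine ⟨n, ?_⟩
    have hb := norm_apply_mul_le hp0 hp hω a n
    have haM : ‖a‖ ≤ M := le_trans (hM₀ a haA) (le_max_left _ _)
    have hanpos : 0 < ‖a n‖ := lt_of_lt_of_le hRpos hy_norm
    have : ω n ≤ M / ‖a n‖ := by
      rw [le_div_iff₀ hanpos, mul_comm]
      exact le_trans hb haM
    refine le_trans this ?_
    rw [div_le_iff₀ hanpos]
    calc M = (M / ε) * ε := by field_simp
      _ ≤ ‖a n‖ * ε := by
          exact mul_le_mul_of_nonneg_right hy_norm hε.le
      _ = ε * ‖a n‖ := mul_comm _ _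
  -- hence small weights occur frequently
  have freq : ∀ ε : ℝ, 0 < ε → ∃ᶠ n in atTop, ω n ≤ ε := by
    intro ε hε
    rw [frequently_atTop]
    intro N
    rcases Nat.eq_zero_or_pos N with hN | hN
    · obtain ⟨n, hn⟩ := key ε hε
      exact ⟨n, by omega, hn⟩
    · have hne : ((Finset.range N).image ω).Nonempty := by
        refine Finset.image_nonempty.mpr ⟨0, Finset.mem_range.mpr hN⟩
      set m : ℝ := ((Finset.range N).image ω).min' hne with hm
      have hmpos : 0 < m := by
        obtain ⟨i, hi, him⟩ := Finset.mem_image.mp (((Finset.range N).image ω).min'_mem hne)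
        rw [hm, ← him]; exact hω i
      obtain ⟨n, hn⟩ := key (min ε (m / 2)) (lt_min hε (by linarith))
      refine ⟨n, ?_, le_trans hn (min_le_left _ _)⟩
      by_contra hlt
      push_neg at hlt
      have : m ≤ ω n := Finset.min'_le _ _ (Finset.mem_image_of_mem ω (Finset.mem_range.mpr hlt))
      have : ω n ≤ m / 2 := le_trans hn (min_le_right _ _)
      linarith
  -- conclude
  have hlb : Filter.IsBoundedUnder (· ≥ ·) atTop ω :=
    ⟨0, Filter.eventually_map.mpr (Filter.Eventually.of_forall fun n => (hω n).le)⟩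
  have hcb : Filter.IsCoboundedUnder (· ≥ ·) atTop ω := by
    refine ⟨1, fun a ha => ?_⟩
    obtain ⟨n, hn1, hn2⟩ := ((freq 1 one_pos).and_eventually (Filter.eventually_map.mp ha)).exists
    exact le_trans hn2 hn1
  have h1 : Filter.liminf ω atTop ≤ 0 := by
    by_contra hpos
    push_neg at hpos
    have := Filter.liminf_le_of_frequently_le (freq _ (by linarith : (0:ℝ) < liminf ω atTop / 2)) hlb
    linarith
  have h2 : (0:ℝ) ≤ Filter.liminf ω atTop :=
    Filter.le_liminf_of_le hcb (Filter.Eventually.of_forall fun n => (hω n).le)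
  linarith
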